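/- arXiv:2510.09520 — 3 statements merged into one kernel-verified Lean document; each statement's English description precedes it below -/
import Mathlib

section
/- With M_φ = ∏_{j=1}^N (cos φ · X_j + sin φ · Y_j) and φ_k = kπ/N, the alternating average (1/N) ∑_{k=1}^N (-1)^k M_{φ_k} equals χ = |0…0⟩⟨1…1| + |1…1⟩⟨0…0|. -/
open Matrix Finset Complex
open scoped Classical

namespace GHZ

abbrev Op (N : ℕ) := Matrix (Fin N → Fin 2) (Fin N → Fin 2) ℂ

/-- all-zeros bitstring -/
def allZeros (N : ℕ) : Fin N → Fin 2 := fun _ => 0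
/-- all-ones bitstring -/
def allOnes (N : ℕ) : Fin N → Fin 2 := fun _ => 1

/-- |x⟩⟨y| -/
noncomputable def ketbra {N : ℕ} (x y : Fin N → Fin 2) : Op N := Matrix.single x y 1

/-- Pauli Z on qubit i -/
noncomputable def Zop {N : ℕ} (i : Fin N) : Op N :=
  Matrix.diagonal fun x => if x i = 0 then 1 else -1

/-- ∏_{i ∈ S} Z_i : the Z-type Pauli operator supported on S -/
noncomputable def ZS {N : ℕ} (S : Finset (Fin N)) : Op N :=
  Matrix.diagonal fun x => ∏ i ∈ S, (if x i = 0 then (1 : ℂ) else -1)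

/-- X^{⊗N} -/
noncomputable def XN (N : ℕ) : Op N :=
  Matrix.of fun x y => if (∀ i, y i = x i + 1) then (1 : ℂ) else 0

def Xmat : Matrix (Fin 2) (Fin 2) ℂ := !![0, 1; 1, 0]
def Ymat : Matrix (Fin 2) (Fin 2) ℂ := !![0, -Complex.I; Complex.I, 0]
def Zmat : Matrix (Fin 2) (Fin 2) ℂ := !![1, 0; 0, -1]

/-- a single-qubit operator M acting on qubit j of an N-qubit register -/
noncomputable def opOn {N : ℕ} (j : Fin N) (M : Matrix (Fin 2) (Fin 2) ℂ) : Op N :=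
  Matrix.of fun x y => if ∀ i, i ≠ j → x i = y i then M (x j) (y j) else 0

/-- the GHZ state vector (|0…0⟩ + |1…1⟩)/√2 -/
noncomputable def ghzVec (N : ℕ) : (Fin N → Fin 2) → ℂ :=
  fun x => if x = allZeros N ∨ x = allOnes N then ((Real.sqrt 2 : ℂ))⁻¹ else 0

/-- coherence operator |0…0⟩⟨1…1| + |1…1⟩⟨0…0| -/
noncomputable def chi (N : ℕ) : Op N :=
  ketbra (allZeros N) (allOnes N) + ketbra (allOnes N) (allZeros N)

/-- population operator |0…0⟩⟨0…0| + |1…1⟩⟨1…1| -/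
noncomputable def popOp (N : ℕ) : Op N :=
  ketbra (allZeros N) (allZeros N) + ketbra (allOnes N) (allOnes N)

/-- M_φ = ∏_j (cos φ X_j + sin φ Y_j) -/
noncomputable def Mop (N : ℕ) (φ : ℝ) : Op N :=
  (List.ofFn fun j : Fin N =>
    opOn j ((Real.cos φ : ℂ) • Xmat + (Real.sin φ : ℂ) • Ymat)).prod

/-- (e^{iφ}|0⟩⟨0| + e^{-iφ}|1⟩⟨1|)^{⊗N} -/
noncomputable def Dop (N : ℕ) (φ : ℝ) : Op N :=
  Matrix.diagonal fun x => ∏ i : Fin N,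
    (if x i = 0 then Complex.exp (Complex.I * φ) else Complex.exp (-Complex.I * φ))

lemma mul_opOn_apply {N : ℕ} (j : Fin N) (M : Matrix (Fin 2) (Fin 2) ℂ) (P : Op N)
    (x y : Fin N → Fin 2) :
    (opOn j M * P) x y = ∑ b : Fin 2, M (x j) b * P (Function.update x j b) y := by
  rw [Matrix.mul_apply]
  have h1 : ∑ z, opOn j M x z * P z y
      = ∑ z ∈ Finset.univ.image (fun b : Fin 2 => Function.update x j b),
          opOn j M x z * P z y := by
    symm
    apply Finset.sum_subset (Finset.subset_univ _)
    intro z _ hz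
    have hc : ¬ (∀ i, i ≠ j → x i = z i) := by
      intro h
      apply hz
      simp only [Finset.mem_image, Finset.mem_univ, true_and]
      refine ⟨z j, ?_⟩
      funext i
      by_cases hi : i = j
      · subst hi; simp
      · rw [Function.update_of_ne hi]
        exact h i hi
    simp [opOn, hc]
  rw [h1, Finset.sum_image]
  · apply Finset.sum_congr rfl
    intro b _
    congr 1
    have hc : ∀ i, i ≠ j → x i = Function.update x j b i := by
      intro i hi; rw [Function.update_of_ne hi]
    show opOn j M x (Function.update x j b) = M (x j) b
    rw [opOn]
    simp only [Matrix.of_apply]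
    rw [if_pos hc, Function.update_self]
  · intro b _ b' _ h
    have := congrFun h j
    simpa using this

lemma prod_map_opOn_apply {N : ℕ} (M : Matrix (Fin 2) (Fin 2) ℂ) :
    ∀ (l : List (Fin N)), l.Nodup → ∀ x y : Fin N → Fin 2,
    ((l.map fun j => opOn j M).prod) x y =
      if (∀ i, i ∉ l → x i = y i) then ∏ j ∈ l.toFinset, M (x j) (y j) else 0 := by
  intro l
  induction l with
  | nil =>
    intro _ x y
    simp [Matrix.one_apply, funext_iff]
  | cons j t ih =>
    intro hnd x y
    have hjt : j ∉ t := (List.nodup_cons.mp hnd).1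
    have htnd : t.Nodup := (List.nodup_cons.mp hnd).2
    rw [List.map_cons, List.prod_cons, mul_opOn_apply]
    have hstep : ∀ b : Fin 2,
        M (x j) b * ((t.map fun j => opOn j M).prod) (Function.update x j b) y =
        if (b = y j ∧ ∀ i, i ∉ (j :: t) → x i = y i)
          then M (x j) b * ∏ i ∈ t.toFinset, M (x i) (y i) else 0 := by
      intro b
      rw [ih htnd]
      have hcond : (∀ i, i ∉ t → Function.update x j b i = y i)
          ↔ (b = y j ∧ ∀ i, i ∉ (j :: t) → x i = y i) := by
        constructor
        · intro h
          refine ⟨by simpa using h j hjt, ?_⟩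
          intro i hi
          have hij : i ≠ j := fun h' => hi (h' ▸ List.mem_cons_self)
          have hit : i ∉ t := fun h' => hi (List.mem_cons_of_mem _ h')
          have := h i hit
          rwa [Function.update_of_ne hij] at this
        · rintro ⟨hb, h⟩ i hit
          by_cases hij : i = j
          · subst hij; simpa using hb
          · rw [Function.update_of_ne hij]
            exact h i (by simp [hit, hij])
      rw [if_congr hcond rfl rfl]
      by_cases hD : (b = y j ∧ ∀ i, i ∉ (j :: t) → x i = y i)
      · rw [if_pos hD, if_pos hD]
        congr 1
        apply Finset.prod_congr rfl
        intro i hi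
        have hij : i ≠ j := by
          intro h'; exact hjt (h' ▸ List.mem_toFinset.mp hi)
        rw [Function.update_of_ne hij]
      · rw [if_neg hD, if_neg hD, mul_zero]
    rw [Finset.sum_congr rfl (fun b _ => hstep b)]
    by_cases hD : (∀ i, i ∉ (j :: t) → x i = y i)
    · have h2 : ∀ b : Fin 2,
          (if b = y j ∧ ∀ i, i ∉ (j :: t) → x i = y i
            then M (x j) b * ∏ i ∈ t.toFinset, M (x i) (y i) else 0)
          = if b = y j then M (x j) b * ∏ i ∈ t.toFinset, M (x i) (y i) else 0 := by
        intro b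
        have hD2 : ∀ i : Fin N, ¬ i = j → i ∉ t → x i = y i :=
          fun i hij hit => hD i (by simp [hij, hit])
        exact if_congr ⟨fun h => h.1, fun h => ⟨h, hD⟩⟩ rfl rfl
      rw [Finset.sum_congr rfl (fun b _ => h2 b),
        Finset.sum_ite_eq' Finset.univ (y j)
          (fun b => M (x j) b * ∏ i ∈ t.toFinset, M (x i) (y i)),
        if_pos (Finset.mem_univ _), if_pos hD, List.toFinset_cons,
        Finset.prod_insert (by simp [hjt])]
    · have hD2 : ¬ ∀ i : Fin N, ¬ i = j → i ∉ t → x i = y i := by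
        intro h
        exact hD (fun i hi => h i (fun e => hi (by simp [e])) (fun e => hi (by simp [e])))
      simp [hD2]


lemma Mop_apply (N : ℕ) (φ : ℝ) (x y : Fin N → Fin 2) :
    Mop N φ x y = if (∀ i, y i = x i + 1)
      then ∏ j : Fin N, (if x j = 0 then Complex.exp (-(Complex.I * φ))
        else Complex.exp (Complex.I * φ)) else 0 := by
  set Mq : Matrix (Fin 2) (Fin 2) ℂ :=
    (Real.cos φ : ℂ) • Xmat + (Real.sin φ : ℂ) • Ymat with hMq
  have hexp : Complex.exp (Complex.I * φ)
      = (Real.cos φ : ℂ) + (Real.sin φ : ℂ) * Complex.I := by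
    rw [mul_comm, Complex.exp_mul_I, Complex.ofReal_cos, Complex.ofReal_sin]
  have hexpn : Complex.exp (-(Complex.I * φ))
      = (Real.cos φ : ℂ) - (Real.sin φ : ℂ) * Complex.I := by
    have h : Complex.exp (Complex.I * (-φ:ℝ))
        = (Real.cos (-φ) : ℂ) + (Real.sin (-φ) : ℂ) * Complex.I := by
      rw [mul_comm, Complex.exp_mul_I, Complex.ofReal_cos, Complex.ofReal_sin]
    rw [Real.cos_neg, Real.sin_neg] at h
    push_cast at h
    rw [show -(Complex.I * (φ:ℂ)) = Complex.I * (-(φ:ℂ)) by ring, h,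
      ← Complex.ofReal_cos, ← Complex.ofReal_sin]
    ring
  have h00 : Mq 0 0 = 0 := by simp [hMq, Xmat, Ymat]
  have h11 : Mq 1 1 = 0 := by simp [hMq, Xmat, Ymat]
  have h01 : Mq 0 1 = Complex.exp (-(Complex.I * φ)) := by
    simp [hMq, Xmat, Ymat, hexpn]; ring
  have h10 : Mq 1 0 = Complex.exp (Complex.I * φ) := by
    simp [hMq, Xmat, Ymat, hexp]
  have htwo : ∀ a : Fin 2, a = 0 ∨ a = 1 := by decide
  rw [Mop, List.ofFn_eq_map,
    prod_map_opOn_apply Mq (List.finRange N) (List.nodup_finRange N) x y,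
    if_pos (fun i hi => absurd (List.mem_finRange i) hi), List.toFinset_finRange]
  by_cases hc : ∀ i, y i = x i + 1
  · rw [if_pos hc]
    apply Finset.prod_congr rfl
    intro j _
    rw [hc j]
    rcases htwo (x j) with h | h <;> rw [h]
    · rw [if_pos rfl, show (0:Fin 2) + 1 = 1 by decide]; exact h01
    · rw [if_neg (by decide), show (1:Fin 2) + 1 = 0 by decide]; exact h10
  · rw [if_neg hc]
    push_neg at hc
    obtain ⟨i, hi⟩ := hc
    have hyi : y i = x i := by
      have : ∀ a b : Fin 2, b ≠ a + 1 → b = a := by decide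
      exact this _ _ hi
    apply Finset.prod_eq_zero (Finset.mem_univ i)
    rw [hyi]
    rcases htwo (x i) with h | h <;> rw [h]
    · exact h00
    · exact h11

end GHZ

open GHZ in
/-- (1/N) ∑_{k=1}^N (-1)^k M_{kπ/N} = χ. -/
theorem alternating_Mop_average_eq_coherence (N : ℕ) (hN : 1 ≤ N) :
    ((N : ℂ))⁻¹ • ∑ k ∈ Finset.Icc 1 N, ((-1 : ℂ)) ^ k • Mop N (k * Real.pi / N)
      = chi N := by
  have hN0 : (N : ℂ) ≠ 0 := Nat.cast_ne_zero.mpr (by omega)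
  have hchi : ∀ u v : Fin N → Fin 2, chi N u v =
      (if allZeros N = u ∧ allOnes N = v then 1 else 0) +
      (if allOnes N = u ∧ allZeros N = v then 1 else 0) := by
    intro u v
    simp [chi, ketbra, Matrix.single, Matrix.add_apply]
  apply Matrix.ext
  intro x y
  have hLHS : (((N : ℂ))⁻¹ • ∑ k ∈ Finset.Icc 1 N,
        ((-1 : ℂ)) ^ k • Mop N (k * Real.pi / N)) x y
      = (N:ℂ)⁻¹ * ∑ k ∈ Finset.Icc 1 N, (-1:ℂ)^k * Mop N (k * Real.pi / N) x y := by
    simp [Matrix.smul_apply, Matrix.sum_apply]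
  rw [hLHS]
  by_cases hc : ∀ i, y i = x i + 1
  case neg =>
    have hz : ∀ k ∈ Finset.Icc 1 N, (-1:ℂ)^k * Mop N (k * Real.pi / N) x y = 0 := by
      intro k _; rw [Mop_apply, if_neg hc, mul_zero]
    rw [Finset.sum_congr rfl hz, Finset.sum_const_zero, mul_zero]
    have c1 : ¬(allZeros N = x ∧ allOnes N = y) := by
      rintro ⟨h1, h2⟩
      exact hc fun i => by rw [← h1, ← h2]; rfl
    have c2 : ¬(allOnes N = x ∧ allZeros N = y) := by
      rintro ⟨h1, h2⟩
      exact hc fun i => by rw [← h1, ← h2]; rfl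
    rw [hchi x y, if_neg c1, if_neg c2, add_zero]
  case pos =>
    set m := (Finset.univ.filter (fun j => x j = 0)).card with hm
    have hmN : m ≤ N := by
      rw [hm]
      calc (Finset.univ.filter (fun j => x j = 0)).card
          ≤ (Finset.univ : Finset (Fin N)).card := Finset.card_filter_le _ _
        _ = N := by simp
    have hcard2 : (Finset.univ.filter (fun j => ¬ x j = 0)).card = N - m := by
      have h := Finset.card_filter_add_card_filter_not
        (s := (Finset.univ : Finset (Fin N))) (p := fun j => x j = 0)
      simp only [Finset.card_univ, Fintype.card_fin] at h
      omega
    set ζ : ℂ := Complex.exp (2 * Real.pi * Complex.I * (((N:ℂ) - m) / N)) with hζ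
    have hterm : ∀ k ∈ Finset.Icc 1 N,
        (-1:ℂ)^k * Mop N (k * Real.pi / N) x y = ζ ^ k := by
      intro k hk
      rw [Mop_apply, if_pos hc, Finset.prod_ite, Finset.prod_const, Finset.prod_const,
        hcard2, ← hm]
      rw [← Complex.exp_nat_mul, ← Complex.exp_nat_mul, ← Complex.exp_add]
      rw [show ((-1:ℂ)) = Complex.exp (Real.pi * Complex.I) from Complex.exp_pi_mul_I.symm,
        ← Complex.exp_nat_mul]
      rw [hζ, ← Complex.exp_nat_mul, ← Complex.exp_add]
      congr 1
      push_cast [Nat.cast_sub hmN]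
      field_simp
      ring
    rw [Finset.sum_congr rfl hterm]
    by_cases hm0 : m = 0 ∨ m = N
    · have hζ1 : ζ = 1 := by
        rcases hm0 with h | h
        · rw [hζ, h]
          rw [show 2 * (Real.pi:ℂ) * Complex.I * (((N:ℂ) - (0:ℕ)) / N)
              = 2 * (Real.pi:ℂ) * Complex.I by
            push_cast; field_simp; simp]
          exact Complex.exp_two_pi_mul_I
        · rw [hζ, h]
          rw [show 2 * (Real.pi:ℂ) * Complex.I * (((N:ℂ) - (N:ℕ)) / N) = 0 by
            push_cast; ring]
          exact Complex.exp_zero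
      rw [hζ1]
      simp only [one_pow, Finset.sum_const, Nat.card_Icc, Nat.add_sub_cancel, nsmul_eq_mul,
        mul_one]
      rw [inv_mul_cancel₀ hN0]
      rcases hm0 with h | h
      · -- m = 0 : x = allOnes, y = allZeros
        have hfe : (Finset.univ.filter (fun j => x j = 0)) = ∅ :=
          Finset.card_eq_zero.mp (hm ▸ h)
        have hx : allOnes N = x := by
          funext i
          have : i ∉ Finset.univ.filter (fun j => x j = 0) := by rw [hfe]; simp
          simp only [Finset.mem_filter, Finset.mem_univ, true_and] at this
          revert this; have : ∀ a : Fin 2, ¬ a = 0 → (1:Fin 2) = a := by decide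
          exact fun h' => this _ h'
        have hy : allZeros N = y := by
          funext i
          rw [hc i, ← hx]
          rfl
        have hne : ¬ (allZeros N = x) := by
          intro h'
          have := congrFun (hx.trans h'.symm) ⟨0, by omega⟩
          simp [allZeros, allOnes] at this
        rw [hchi x y, if_neg (fun hh => hne hh.1), if_pos ⟨hx, hy⟩]
        norm_num
      · -- m = N : x = allZeros, y = allOnes
        have hfe : (Finset.univ.filter (fun j => x j = 0)) = Finset.univ :=
          Finset.eq_univ_of_card _ (by rw [← hm, h]; simp)
        have hx : allZeros N = x := by
          funext i
          have : i ∈ Finset.univ.filter (fun j => x j = 0) := by rw [hfe]; simp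
          simp only [Finset.mem_filter, Finset.mem_univ, true_and] at this
          exact this.symm
        have hy : allOnes N = y := by
          funext i
          rw [hc i, ← hx]
          rfl
        have hne : ¬ (allOnes N = x) := by
          intro h'
          have := congrFun (h'.trans hx.symm) ⟨0, by omega⟩
          simp [allZeros, allOnes] at this
        rw [hchi x y, if_pos ⟨hx, hy⟩, if_neg (fun hh => hne hh.1)]
        norm_num
    · push_neg at hm0
      have hmlt : m < N := lt_of_le_of_ne hmN hm0.2
      have hmpos : 0 < m := Nat.pos_of_ne_zero hm0.1
      have hζN : ζ ^ N = 1 := by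
        rw [hζ, ← Complex.exp_nat_mul]
        rw [show (N:ℂ) * (2 * (Real.pi:ℂ) * Complex.I * (((N:ℂ) - m) / N))
            = ((N - m : ℕ) : ℂ) * (2 * (Real.pi:ℂ) * Complex.I) by
          push_cast [Nat.cast_sub hmN]; field_simp]
        rw [Complex.exp_nat_mul, Complex.exp_two_pi_mul_I, one_pow]
      have hζne : ζ ≠ 1 := by
        intro hone
        rw [hζ, Complex.exp_eq_one_iff] at hone
        obtain ⟨n, hn⟩ := hone
        have h2πI : (2 * (Real.pi:ℂ) * Complex.I) ≠ 0 := by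
          simp [Real.pi_ne_zero, Complex.I_ne_zero, Complex.ofReal_ne_zero]
        have h3 : (2 * (Real.pi:ℂ) * Complex.I) * (((N:ℂ) - m) / N)
            = (2 * (Real.pi:ℂ) * Complex.I) * n := by
          rw [hn]; ring
        have h4 := mul_left_cancel₀ h2πI h3
        rw [div_eq_iff hN0] at h4
        have h6 : (N:ℤ) - m = n * N := by exact_mod_cast h4
        have hNpos : (0:ℤ) < N := by exact_mod_cast (by omega : 0 < N)
        have hb1 : (0:ℤ) < (N:ℤ) - m := by
          have : (m:ℤ) < N := by exact_mod_cast hmlt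
          omega
        have hb2 : (N:ℤ) - m < N := by
          have : (0:ℤ) < m := by exact_mod_cast hmpos
          omega
        rcases le_or_gt n 0 with hle | hgt
        · nlinarith
        · have : (1:ℤ) ≤ n := hgt
          nlinarith
      have hsum : ∑ k ∈ Finset.Icc 1 N, ζ^k = 0 := by
        rw [← Finset.Ico_add_one_right_eq_Icc, Finset.sum_Ico_eq_sum_range, Nat.add_sub_cancel]
        have hh : ∀ i ∈ Finset.range N, ζ^(1+i) = ζ * ζ^i := fun i _ => by
          rw [pow_add, pow_one]
        rw [Finset.sum_congr rfl hh, ← Finset.mul_sum, geom_sum_eq hζne, hζN]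
        simp
      rw [hsum, mul_zero]
      have hx0 : ¬ (allZeros N = x) := by
        intro h'
        apply hm0.2
        rw [hm]
        have : (Finset.univ.filter (fun j => x j = 0)) = Finset.univ := by
          apply Finset.eq_univ_of_forall
          intro i
          simp [← congrFun h' i, allZeros]
        rw [this]; simp
      have hx1 : ¬ (allOnes N = x) := by
        intro h'
        apply hm0.1
        rw [hm]
        rw [show (Finset.univ.filter (fun j => x j = 0)) = ∅ by
          apply Finset.filter_eq_empty_iff.mpr
          intro i _
          rw [← congrFun h' i]
          simp [allOnes]]
        simp
      rw [hchi x y, if_neg (fun hh => hx0 hh.1), if_neg (fun hh => hx1 hh.1), add_zero]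
end

section
/- If a density matrix ρ on N qubits satisfies ⟨G_N|ρ|G_N⟩ > 1/2, then ρ is not a convex combination of product states across any bipartition; i.e., for every nontrivial bipartition (A, B) of the qubits and every separable-across-(A,B) state σ, ⟨G_N|σ|G_N⟩ ≤ 1/2. -/
open Matrix Finset Complex
open scoped Classical

namespace GHZ

/-- a pure state vector on N qubits that is a product across the bipartition (A, Aᶜ) -/
def IsPureProduct {N : ℕ} (A : Finset (Fin N)) (ψ : (Fin N → Fin 2) → ℂ) : Prop :=
  ∃ (a : ({i : Fin N // i ∈ A} → Fin 2) → ℂ) (b : ({i : Fin N // i ∉ A} → Fin 2) → ℂ),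
    ∀ x, ψ x = a (fun i => x i.1) * b (fun i => x i.1)

/-- a state that is a convex combination of normalized pure product states across (A, Aᶜ) -/
def SeparableAcross {N : ℕ} (A : Finset (Fin N)) (σ : Op N) : Prop :=
  ∃ (n : ℕ) (p : Fin n → ℝ) (ψ : Fin n → (Fin N → Fin 2) → ℂ),
    (∀ k, 0 ≤ p k) ∧ (∑ k, p k = 1) ∧
    (∀ k, IsPureProduct A (ψ k)) ∧ (∀ k, star (ψ k) ⬝ᵥ ψ k = 1) ∧
    σ = ∑ k, (p k : ℂ) • Matrix.vecMulVec (ψ k) (star (ψ k))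

end GHZ


namespace GHZ

-- helper lemmas
lemma sum_mulVec' {N n : ℕ} (M : Fin n → Op N) (v : (Fin N → Fin 2) → ℂ) :
    (∑ k, M k).mulVec v = ∑ k, (M k).mulVec v := by
  ext x
  simp only [Finset.sum_apply, Matrix.sum_apply, Matrix.mulVec, dotProduct, Finset.sum_mul]
  rw [Finset.sum_comm]

lemma vecMulVec_mulVec' {N : ℕ} (u w v : (Fin N → Fin 2) → ℂ) :
    (Matrix.vecMulVec u w).mulVec v = (w ⬝ᵥ v) • u := by
  ext x
  simp [Matrix.mulVec, Matrix.vecMulVec, dotProduct, Finset.mul_sum, mul_comm, mul_assoc,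
    mul_left_comm]

lemma star_dot_comm {N : ℕ} (u v : (Fin N → Fin 2) → ℂ) :
    star u ⬝ᵥ v = starRingEnd ℂ (star v ⬝ᵥ u) := by
  simp [dotProduct, map_sum, mul_comm]

lemma pure_bound {N : ℕ} (hN : 2 ≤ N) (A : Finset (Fin N)) (hA : A ≠ ∅) (hA' : A ≠ univ)
    (ψ : (Fin N → Fin 2) → ℂ) (hp : IsPureProduct A ψ) (hn : star ψ ⬝ᵥ ψ = 1) :
    Complex.normSq (star (ghzVec N) ⬝ᵥ ψ) ≤ 1 / 2 := by
  obtain ⟨a, b, hab⟩ := hp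
  -- the equivalence
  let e : (Fin N → Fin 2) ≃ (({i : Fin N // i ∈ A} → Fin 2) × ({i : Fin N // i ∉ A} → Fin 2)) :=
  { toFun := fun x => (fun i => x i.1, fun i => x i.1)
    invFun := fun p i => if h : i ∈ A then p.1 ⟨i, h⟩ else p.2 ⟨i, h⟩
    left_inv := by intro x; funext i; by_cases h : i ∈ A <;> simp [h]
    right_inv := by
      intro p
      refine Prod.ext ?_ ?_ <;> funext i <;> simp [i.2] }
  have hψe : ∀ u v, ψ (e.symm (u, v)) = a u * b v := by
    intro u v
    rw [hab]
    congr 1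
    · congr 1; funext i; simp [e, i.2]
    · congr 1; funext i; simp [e, i.2]
  set Sa : ℝ := ∑ u, Complex.normSq (a u) with hSa
  set Sb : ℝ := ∑ v, Complex.normSq (b v) with hSb
  have hfact : Sa * Sb = 1 := by
    have h1 : star ψ ⬝ᵥ ψ = ((Sa : ℂ)) * ((Sb : ℂ)) := by
      rw [dotProduct, ← Equiv.sum_comp e.symm fun x => (star ψ) x * ψ x]
      rw [Fintype.sum_prod_type]
      push_cast [hSa, hSb, Finset.sum_mul_sum]
      refine Finset.sum_congr rfl fun u _ => Finset.sum_congr rfl fun v _ => ?_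
      simp only [Pi.star_apply, hψe, RCLike.star_def, _root_.map_mul]
      rw [← Complex.mul_conj (a u), ← Complex.mul_conj (b v)]
      ring
    rw [hn] at h1
    have h2 : ((Sa * Sb : ℝ) : ℂ) = 1 := by rw [Complex.ofReal_mul, ← h1]
    exact_mod_cast h2
  have hSa0 : (0:ℝ) ≤ Sa := Finset.sum_nonneg fun _ _ => Complex.normSq_nonneg _
  have hSb0 : (0:ℝ) ≤ Sb := Finset.sum_nonneg fun _ _ => Complex.normSq_nonneg _
  -- special points
  set u0 : {i : Fin N // i ∈ A} → Fin 2 := fun _ => 0 with hu0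
  set u1 : {i : Fin N // i ∈ A} → Fin 2 := fun _ => 1 with hu1
  set v0 : {i : Fin N // i ∉ A} → Fin 2 := fun _ => 0 with hv0
  set v1 : {i : Fin N // i ∉ A} → Fin 2 := fun _ => 1 with hv1
  obtain ⟨i, hi⟩ := Finset.nonempty_iff_ne_empty.2 hA
  obtain ⟨j, hj⟩ : ∃ j, j ∉ A := by
    by_contra h
    push_neg at h
    exact hA' (Finset.eq_univ_of_forall h)
  have hune : u0 ≠ u1 := by
    intro h
    have := congrFun h ⟨i, hi⟩
    simp [hu0, hu1] at this
  have hvne : v0 ≠ v1 := by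
    intro h
    have := congrFun h ⟨j, hj⟩
    simp [hv0, hv1] at this
  have ha01 : Complex.normSq (a u0) + Complex.normSq (a u1) ≤ Sa := by
    have := Finset.sum_le_sum_of_subset_of_nonneg (Finset.subset_univ ({u0, u1} : Finset _))
      (fun x _ _ => Complex.normSq_nonneg (a x))
    rwa [Finset.sum_pair hune] at this
  have hb01 : Complex.normSq (b v0) + Complex.normSq (b v1) ≤ Sb := by
    have := Finset.sum_le_sum_of_subset_of_nonneg (Finset.subset_univ ({v0, v1} : Finset _))
      (fun x _ _ => Complex.normSq_nonneg (b x))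
    rwa [Finset.sum_pair hvne] at this
  -- ψ at the two special points
  have hψ0 : ψ (allZeros N) = a u0 * b v0 := by rw [hab]; rfl
  have hψ1 : ψ (allOnes N) = a u1 * b v1 := by rw [hab]; rfl
  have hzo : allZeros N ≠ allOnes N := by
    intro h
    have := congrFun h ⟨0, by omega⟩
    simp [allZeros, allOnes] at this
  have hG : star (ghzVec N) ⬝ᵥ ψ
      = ((Real.sqrt 2 : ℂ))⁻¹ * (ψ (allZeros N) + ψ (allOnes N)) := by
    rw [dotProduct,
      ← Finset.sum_subset (Finset.subset_univ ({allZeros N, allOnes N} : Finset _))]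
    · rw [Finset.sum_pair hzo]
      simp [ghzVec]
      ring
    · intro x _ hx
      simp only [Finset.mem_insert, Finset.mem_singleton, not_or] at hx
      simp [ghzVec, hx.1, hx.2]
  rw [hG, Complex.normSq_mul]
  have h2 : Complex.normSq (((Real.sqrt 2 : ℝ) : ℂ))⁻¹ = 1 / 2 := by
    rw [Complex.normSq_inv, Complex.normSq_ofReal]
    rw [Real.mul_self_sqrt (by norm_num)]
    norm_num
  rw [h2]
  have key : Complex.normSq (ψ (allZeros N) + ψ (allOnes N)) ≤ 1 := by
    have habs : ‖ψ (allZeros N) + ψ (allOnes N)‖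
        ≤ ‖a u0‖ * ‖b v0‖ + ‖a u1‖ * ‖b v1‖ := by
      rw [hψ0, hψ1]
      refine (norm_add_le _ _).trans ?_
      simp [norm_mul]
    have hsq : ∀ z : ℂ, Complex.normSq z = ‖z‖ ^ 2 := fun z => (Complex.sq_norm z).symm
    rw [hsq]
    set α0 := ‖a u0‖
    set α1 := ‖a u1‖
    set β0 := ‖b v0‖
    set β1 := ‖b v1‖
    have hα0 : α0 ^ 2 = Complex.normSq (a u0) := Complex.sq_norm _
    have hα1 : α1 ^ 2 = Complex.normSq (a u1) := Complex.sq_norm _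
    have hβ0 : β0 ^ 2 = Complex.normSq (b v0) := Complex.sq_norm _
    have hβ1 : β1 ^ 2 = Complex.normSq (b v1) := Complex.sq_norm _
    have hn0 : (0:ℝ) ≤ ‖ψ (allZeros N) + ψ (allOnes N)‖ := norm_nonneg _
    nlinarith [sq_nonneg (α0 * β1 - α1 * β0), norm_nonneg (a u0), norm_nonneg (a u1),
      norm_nonneg (b v0), norm_nonneg (b v1)]
  nlinarith [Complex.normSq_nonneg (ψ (allZeros N) + ψ (allOnes N))]


lemma dot_sum' {N : ℕ} {n : ℕ} (u : (Fin N → Fin 2) → ℂ) (v : Fin n → (Fin N → Fin 2) → ℂ) :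
    u ⬝ᵥ (∑ k, v k) = ∑ k, u ⬝ᵥ v k := by
  simp only [dotProduct, Finset.sum_apply, Finset.mul_sum]
  rw [Finset.sum_comm]

end GHZ

open GHZ in
/-- across any nontrivial bipartition (A, Aᶜ), every separable state σ has
GHZ overlap at most 1/2; hence any ρ with ⟨G_N|ρ|G_N⟩ > 1/2 is not separable across any
nontrivial bipartition. -/
theorem ghz_overlap_of_separable_le_half (N : ℕ) (hN : 2 ≤ N)
    (A : Finset (Fin N)) (hA : A ≠ ∅) (hA' : A ≠ univ) :
    (∀ σ : Op N, SeparableAcross A σ →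
        (star (ghzVec N) ⬝ᵥ σ.mulVec (ghzVec N)).re ≤ 1 / 2)
    ∧ ∀ ρ : Op N, 1 / 2 < (star (ghzVec N) ⬝ᵥ ρ.mulVec (ghzVec N)).re →
        ¬ SeparableAcross A ρ := by
  have main : ∀ σ : Op N, SeparableAcross A σ →
      (star (ghzVec N) ⬝ᵥ σ.mulVec (ghzVec N)).re ≤ 1 / 2 := by
    intro σ hσ
    obtain ⟨n, p, ψ, hp0, hp1, hprod, hnorm, rfl⟩ := hσ
    have hterm : ∀ k, star (ghzVec N) ⬝ᵥ
        (((p k : ℂ) • Matrix.vecMulVec (ψ k) (star (ψ k))).mulVec (ghzVec N))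
        = ((p k * Complex.normSq (star (ghzVec N) ⬝ᵥ ψ k) : ℝ) : ℂ) := by
      intro k
      rw [Matrix.smul_mulVec, vecMulVec_mulVec', dotProduct_smul,
        dotProduct_smul, star_dot_comm (ψ k) (ghzVec N)]
      rw [smul_eq_mul, smul_eq_mul, mul_comm ((starRingEnd ℂ) _), Complex.mul_conj]
      push_cast
      ring
    rw [sum_mulVec', dot_sum']
    simp only [hterm]
    rw [← Complex.ofReal_sum]
    rw [Complex.ofReal_re]
    calc ∑ k, p k * Complex.normSq (star (ghzVec N) ⬝ᵥ ψ k)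
        ≤ ∑ k, p k * (1 / 2) := by
          refine Finset.sum_le_sum fun k _ => ?_
          exact mul_le_mul_of_nonneg_left
            (pure_bound hN A hA hA' (ψ k) (hprod k) (hnorm k)) (hp0 k)
      _ = 1 / 2 := by rw [← Finset.sum_mul, hp1, one_mul]
  refine ⟨main, fun ρ hρ hsep => ?_⟩
  exact absurd (main ρ hsep) (not_le.2 hρ)
end

section
/- For the alternating-sign Fourier reconstruction, χ = I_N + I_{−N} where I_q = (1/(2(N+1))) ∑_{j=0}^{2N+1} e^{iqjπ/(N+1)} M_{jπ/(N+1)}, with M_φ = X^{⊗N}(e^{iφ}|0⟩⟨0| + e^{-iφ}|1⟩⟨1|)^{⊗N} and χ = |0…0⟩⟨1…1| + |1…1⟩⟨0…0|. -/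
open Matrix Finset Complex
open scoped Classical

namespace GHZ

/-- Fourier component I_q of the parity-oscillation signal -/
noncomputable def Iq (N : ℕ) (q : ℤ) : Op N :=
  ((2 * ((N : ℂ) + 1)))⁻¹ • ∑ j ∈ Finset.range (2 * N + 2),
    Complex.exp (Complex.I * q * j * Real.pi / ((N : ℂ) + 1)) •
      (XN N * Dop N (j * Real.pi / ((N : ℝ) + 1)))

end GHZ

open GHZ in

private lemma geom_aux' (n : ℕ) (hn : 0 < n) (k : ℤ) :
    ∑ j ∈ Finset.range (2 * n), Complex.exp (Complex.I * k * j * Real.pi / n)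
      = if (2 * n : ℤ) ∣ k then (2 * n : ℂ) else 0 := by
  have hπ : (Real.pi : ℂ) ≠ 0 := by exact_mod_cast Real.pi_ne_zero
  have hn' : ((n : ℂ)) ≠ 0 := Nat.cast_ne_zero.2 hn.ne'
  have hrw : ∀ j : ℕ, Complex.I * k * j * Real.pi / n
      = j * (Complex.I * k * Real.pi / n) := fun j => by ring
  simp only [hrw, Complex.exp_nat_mul]
  by_cases hd : (2 * n : ℤ) ∣ k
  · obtain ⟨t, ht⟩ := hd
    have hω : Complex.exp (Complex.I * k * Real.pi / n) = 1 := by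
      have harg : Complex.I * k * Real.pi / n = t * (2 * Real.pi * Complex.I) := by
        rw [ht]; push_cast; field_simp
      rw [harg, Complex.exp_int_mul_two_pi_mul_I]
    simp only [hω, one_pow, Finset.sum_const, Finset.card_range, nsmul_eq_mul, mul_one]
    rw [if_pos ⟨t, ht⟩]
    push_cast; ring
  · have hω : Complex.exp (Complex.I * k * Real.pi / n) ≠ 1 := by
      intro h
      obtain ⟨t, ht⟩ := Complex.exp_eq_one_iff.mp h
      apply hd
      refine ⟨t, ?_⟩
      field_simp at ht
      have h3 : (k : ℂ) * (Complex.I * Real.pi) = (2 * n * t : ℤ) * (Complex.I * Real.pi) := by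
        push_cast; linear_combination (Complex.I * Real.pi) * ht
      have h4 : (k : ℂ) = ((2 * n * t : ℤ) : ℂ) :=
        mul_right_cancel₀ (by simp [Complex.I_ne_zero, hπ]) h3
      exact_mod_cast h4
    rw [geom_sum_eq hω]
    have hpow : Complex.exp (Complex.I * k * Real.pi / n) ^ (2 * n) = 1 := by
      rw [← Complex.exp_nat_mul]
      have : (2 * n : ℕ) * (Complex.I * k * Real.pi / n) = k * (2 * Real.pi * Complex.I) := by
        push_cast; field_simp
      rw [this, Complex.exp_int_mul_two_pi_mul_I]
    rw [hpow]
    simp [hd]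

private lemma dop_val' (N : ℕ) (φ : ℝ) (y : Fin N → Fin 2) :
    (∏ i : Fin N, (if y i = 0 then Complex.exp (Complex.I * φ) else Complex.exp (-Complex.I * φ)))
      = Complex.exp (Complex.I * φ *
          ((2 * ((Finset.univ.filter fun i => y i = 0).card : ℤ) - N : ℤ) : ℂ)) := by
  classical
  rw [Finset.prod_ite]
  simp only [Finset.prod_const]
  set m := (Finset.univ.filter fun i => y i = 0).card with hm
  set m' := (Finset.univ.filter fun i => ¬ y i = 0).card with hm'
  have hsum : m + m' = N := by
    rw [hm, hm', Finset.card_filter_add_card_filter_not]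
    simp
  rw [← Complex.exp_nat_mul, ← Complex.exp_nat_mul, ← Complex.exp_add]
  congr 1
  have h1 : (m : ℂ) + m' = N := by exact_mod_cast congrArg (Nat.cast : ℕ → ℂ) hsum
  have h2 : (m' : ℂ) = (N : ℂ) - m := by linear_combination h1
  rw [h2]
  push_cast
  ring

open GHZ in
private lemma Iq_apply (N : ℕ) (q : ℤ) (x y : Fin N → Fin 2) :
    Iq N q x y = if (2 * ((N : ℤ) + 1)) ∣ (q + 2 * ((Finset.univ.filter fun i => y i = 0).card : ℤ) - N)
      then XN N x y else 0 := by
  classical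
  have hn' : (2 * ((N : ℂ) + 1)) ≠ 0 :=
    mul_ne_zero two_ne_zero (Nat.cast_add_one_ne_zero N)
  set m : ℤ := ((Finset.univ.filter fun i => y i = 0).card : ℤ) with hm
  unfold Iq Dop
  simp only [Matrix.smul_apply, Matrix.sum_apply, Matrix.smul_apply, Matrix.mul_diagonal,
    smul_eq_mul]
  have hterm : ∀ j : ℕ,
      Complex.exp (Complex.I * q * j * Real.pi / ((N : ℂ) + 1)) *
        (XN N x y * ∏ i : Fin N, (if y i = 0
          then Complex.exp (Complex.I * ((((j : ℝ) * Real.pi / ((N : ℝ) + 1)) : ℝ) : ℂ))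
          else Complex.exp (-Complex.I * ((((j : ℝ) * Real.pi / ((N : ℝ) + 1)) : ℝ) : ℂ))))
      = XN N x y * Complex.exp (Complex.I * ((q + 2 * m - N : ℤ) : ℂ) * j * Real.pi / ((N + 1 : ℕ) : ℂ)) := by
    intro j
    rw [dop_val' N _ y, ← hm]
    rw [mul_left_comm, ← Complex.exp_add]
    congr 2
    have hden : ((N : ℂ) + 1) ≠ 0 := Nat.cast_add_one_ne_zero N
    push_cast
    field_simp
    ring
  simp only [hterm]
  rw [← Finset.mul_sum]
  have hr : 2 * N + 2 = 2 * (N + 1) := by ring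
  rw [hr, geom_aux' (N + 1) (Nat.succ_pos N) (q + 2 * m - N)]
  have hdvd : (2 : ℤ) * ((N + 1 : ℕ) : ℤ) = 2 * ((N : ℤ) + 1) := by push_cast; ring
  rw [hdvd]
  by_cases hd : (2 * ((N : ℤ) + 1)) ∣ (q + 2 * m - N)
  · rw [if_pos hd, if_pos hd]
    rw [show (((N + 1 : ℕ)) : ℂ) = (N : ℂ) + 1 by push_cast; ring]
    rw [mul_comm (XN N x y), ← mul_assoc, inv_mul_cancel₀ hn', one_mul]
  · rw [if_neg hd, if_neg hd, mul_zero, mul_zero]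

open GHZ in
/-- χ = I_N + I_{-N}. -/
theorem coherence_from_fourier_components (N : ℕ) (hN : 1 ≤ N) :
    chi N = Iq N N + Iq N (-(N : ℤ)) := by
  classical
  ext x y
  rw [Matrix.add_apply, Iq_apply, Iq_apply]
  set m : ℤ := ((Finset.univ.filter fun i => y i = 0).card : ℤ) with hm
  have hmN : m ≤ N := by
    rw [hm]
    exact_mod_cast le_trans (Finset.card_filter_le _ _) (by simp)
  have hm0 : 0 ≤ m := by positivity
  have hones : m = 0 ↔ y = allOnes N := by
    rw [hm]
    constructor
    · intro h
      have h0 : (Finset.univ.filter fun i => y i = 0) = ∅ := by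
        apply Finset.card_eq_zero.mp; exact_mod_cast h
      funext i
      have := Finset.eq_empty_iff_forall_notMem.mp h0 i
      simp only [Finset.mem_filter, Finset.mem_univ, true_and] at this
      have : y i = 1 := by omega
      simpa [allOnes] using this
    · intro h
      rw [h]
      have : (Finset.univ.filter fun i => allOnes N i = 0) = ∅ := by
        apply Finset.filter_false_of_mem
        intro i _
        simp [allOnes]
      rw [this]
      simp
  have hzeros : m = N ↔ y = allZeros N := by
    rw [hm]
    constructor
    · intro h
      have h0 : (Finset.univ.filter fun i => y i = 0) = Finset.univ := by
        apply Finset.eq_univ_of_card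
        simpa using (by exact_mod_cast h : (Finset.univ.filter fun i => y i = 0).card = N)
      funext i
      have := (Finset.eq_univ_iff_forall.mp h0) i
      simp only [Finset.mem_filter, Finset.mem_univ, true_and] at this
      simpa [allZeros] using this
    · intro h
      rw [h]
      have : (Finset.univ.filter fun i => allZeros N i = 0) = Finset.univ := by
        apply Finset.filter_true_of_mem
        intro i _
        simp [allZeros]
      rw [this]
      simp
  have hXones : XN N x (allOnes N) = if x = allZeros N then 1 else 0 := by
    unfold XN
    simp only [Matrix.of_apply]
    congr 1
    simp only [eq_iff_iff]
    constructor
    · intro h; funext i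
      have := h i
      simp only [allOnes] at this
      have : x i = 0 := by omega
      simpa [allZeros] using this
    · intro h i
      rw [h]
      simp [allOnes, allZeros]
  have hXzeros : XN N x (allZeros N) = if x = allOnes N then 1 else 0 := by
    unfold XN
    simp only [Matrix.of_apply]
    congr 1
    simp only [eq_iff_iff]
    constructor
    · intro h; funext i
      have := h i
      simp only [allZeros] at this
      have : x i = 1 := by omega
      simpa [allOnes] using this
    · intro h i
      rw [h]
      simp [allOnes, allZeros]
  have hchi : chi N x y = (if x = allZeros N ∧ y = allOnes N then 1 else 0)
      + (if x = allOnes N ∧ y = allZeros N then 1 else 0) := by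
    unfold chi ketbra
    rw [Matrix.add_apply]
    congr 1 <;> simp [Matrix.single, eq_comm]
  rw [hchi]
  -- now case on divisibility
  have hdvd1 : (2 * ((N : ℤ) + 1)) ∣ ((N : ℤ) + 2 * m - N) ↔ m = 0 := by
    constructor
    · intro hd
      by_contra hne
      have hpos : 0 < (N : ℤ) + 2 * m - N := by omega
      have := Int.le_of_dvd hpos hd
      omega
    · intro h; rw [h]; simp
  have hdvd2 : (2 * ((N : ℤ) + 1)) ∣ (-(N : ℤ) + 2 * m - N) ↔ m = N := by
    constructor
    · intro hd
      by_contra hne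
      have hpos : 0 < -(-(N : ℤ) + 2 * m - N) := by omega
      have := Int.le_of_dvd hpos ((dvd_neg).mpr hd)
      omega
    · intro h; rw [h]; exact ⟨0, by ring⟩
  by_cases h1 : m = 0
  · have hy : y = allOnes N := hones.mp h1
    have hyne : ¬ m = N := by omega
    simp only [hdvd1, hdvd2]
    rw [if_pos h1, if_neg hyne]
    rw [hy, hXones]
    have : ¬ (x = allOnes N ∧ allOnes N = allZeros N) := by
      rintro ⟨-, h⟩
      have := congrFun h ⟨0, by omega⟩
      simp [allOnes, allZeros] at this
    rw [if_neg this]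
    by_cases hx : x = allZeros N <;> simp [hx, hy]
  · by_cases h2 : m = N
    · have hy : y = allZeros N := hzeros.mp h2
      simp only [hdvd1, hdvd2]
      rw [if_neg h1, if_pos h2]
      rw [hy, hXzeros]
      have : ¬ (x = allZeros N ∧ allZeros N = allOnes N) := by
        rintro ⟨-, h⟩
        have := congrFun h ⟨0, by omega⟩
        simp [allOnes, allZeros] at this
      rw [if_neg this]
      by_cases hx : x = allOnes N <;> simp [hx, hy]
    · simp only [hdvd1, hdvd2]
      rw [if_neg h1, if_neg h2]
      have hy1 : ¬ y = allOnes N := fun h => h1 (hones.mpr h)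
      have hy2 : ¬ y = allZeros N := fun h => h2 (hzeros.mpr h)
      simp [hy1, hy2]
end
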